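/- Let W = 𝟙_a − (K/(k−1)) P_Ψ act on the antisymmetric subspace of ℂ^{2K}⊗ℂ^{2K}, where P_Ψ projects onto |Ψ⟩ = (1/√K) Σ_{i=1}^{K} f†_{2i-1} f†_{2i}|0⟩ (the maximally correlated two-fermion state). Then for every normalized two-fermion pure state |φ⟩ whose coefficient matrix has rank at most 2(k−1) (Slater rank ≤ k−1), ⟨φ|W|φ⟩ ≥ 0; equivalently |⟨Ψ|φ⟩|² ≤ (k−1)/K for every such φ. -/

import Mathlib

open Matrix

/-- for the optimal fermionic Slater witness
`W = 𝟙_a − (K/(k−1)) P_Ψ` with `|Ψ⟩ = (1/√K) Σ f†_{2i-1} f†_{2i} |0⟩`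
(coefficient matrix with entries `±1/(2√K)` on the pair pattern), every normalized
two-fermion state with coefficient matrix `w` of rank at most `2(k−1)` (Slater rank
`≤ k−1`) satisfies `|⟨Ψ|φ⟩|² ≤ (k−1)/K`, i.e. `⟨φ|W|φ⟩ ≥ 0`. -/
theorem fermionic_slater_witness_bound
    (K k : ℕ) (hK : 1 ≤ K) (hk : 2 ≤ k)
    (w : Matrix (Fin (2 * K)) (Fin (2 * K)) ℂ) (hw : wᵀ = -w)
    (hnorm : (∑ i : Fin (2 * K), ∑ j : Fin (2 * K), ‖w i j‖ ^ 2) = 1 / 2)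
    (hrank : w.rank ≤ 2 * (k - 1)) :
    ‖2 * ∑ i : Fin (2 * K), ∑ j : Fin (2 * K),
        (starRingEnd ℂ)
          (if (i : ℕ) % 2 = 0 ∧ (j : ℕ) = (i : ℕ) + 1 then
            (((2 * Real.sqrt K)⁻¹ : ℝ) : ℂ)
          else if (j : ℕ) % 2 = 0 ∧ (i : ℕ) = (j : ℕ) + 1 then
            -(((2 * Real.sqrt K)⁻¹ : ℝ) : ℂ)
          else 0) * w i j‖ ^ 2
      ≤ ((k : ℝ) - 1) / K := by
  classical
  have hK0 : (0:ℝ) < K := by exact_mod_cast hK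
  set c : ℝ := (2 * Real.sqrt K)⁻¹ with hc
  have hc0 : 0 ≤ c := by rw [hc]; positivity
  have hc2 : c ^ 2 = 1 / (4 * K) := by
    have h4 : (2 * Real.sqrt K) ^ 2 = 4 * K := by
      rw [mul_pow, Real.sq_sqrt hK0.le]; ring
    rw [hc, inv_pow, h4, one_div]
  let a : Matrix (Fin (2*K)) (Fin (2*K)) ℂ := fun i j =>
    if (i : ℕ) % 2 = 0 ∧ (j : ℕ) = (i : ℕ) + 1 then ((c : ℝ) : ℂ)
    else if (j : ℕ) % 2 = 0 ∧ (i : ℕ) = (j : ℕ) + 1 then -((c : ℝ) : ℂ) else 0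
  show ‖2 * ∑ i : Fin (2*K), ∑ j : Fin (2*K), (starRingEnd ℂ) (a i j) * w i j‖ ^ 2
      ≤ ((k : ℝ) - 1) / K
  -- the swap permutation
  have hσlt : ∀ j : Fin (2*K), (if (j:ℕ) % 2 = 0 then (j:ℕ)+1 else (j:ℕ)-1) < 2*K := by
    intro j; have h2 := j.2; split <;> omega
  let σ : Fin (2*K) → Fin (2*K) := fun j => ⟨_, hσlt j⟩
  have hσinv : Function.Involutive σ := by
    intro j
    apply Fin.ext
    show (if ((if (j:ℕ)%2=0 then (j:ℕ)+1 else (j:ℕ)-1):ℕ) % 2 = 0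
        then (if (j:ℕ)%2=0 then (j:ℕ)+1 else (j:ℕ)-1)+1
        else (if (j:ℕ)%2=0 then (j:ℕ)+1 else (j:ℕ)-1)-1) = (j:ℕ)
    have h2 := j.2
    split_ifs <;> omega
  have ha0 : ∀ (i j : Fin (2*K)), i ≠ σ j → a i j = 0 := by
    intro i j hij
    have hij' : (i:ℕ) ≠ (if (j:ℕ)%2=0 then (j:ℕ)+1 else (j:ℕ)-1) := by
      intro h; exact hij (Fin.ext h)
    have h2 := j.2
    simp only [a]
    rw [if_neg, if_neg]
    · rintro ⟨h3, h4⟩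
      rw [if_pos h3] at hij'; omega
    · rintro ⟨h3, h4⟩
      have hj2 : (j:ℕ) % 2 ≠ 0 := by omega
      rw [if_neg hj2] at hij'; omega
  have haσ : ∀ j : Fin (2*K), a (σ j) j = if (j:ℕ)%2=0 then -((c:ℝ):ℂ) else ((c:ℝ):ℂ) := by
    intro j
    have h2 := j.2
    show (if (σ j : ℕ) % 2 = 0 ∧ (j : ℕ) = (σ j : ℕ) + 1 then ((c : ℝ) : ℂ)
      else if (j : ℕ) % 2 = 0 ∧ (σ j : ℕ) = (j : ℕ) + 1 then -((c : ℝ) : ℂ) else 0) = _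
    by_cases hj : (j:ℕ) % 2 = 0
    · have h1 : (σ j : ℕ) = (j:ℕ)+1 := if_pos hj
      rw [h1, if_neg (by omega), if_pos ⟨hj, rfl⟩, if_pos hj]
    · have h1 : (σ j : ℕ) = (j:ℕ)-1 := if_neg hj
      rw [h1, if_pos ⟨by omega, by omega⟩, if_neg hj]
  -- orthonormal basis of the column space
  let col : Fin (2*K) → EuclideanSpace ℂ (Fin (2*K)) := fun j => WithLp.toLp 2 (fun i => w i j)
  let V : Submodule ℂ (EuclideanSpace ℂ (Fin (2*K))) := Submodule.span ℂ (Set.range col)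
  have hVrank : Module.finrank ℂ V = w.rank := by
    have h1 : (V.map (EuclideanSpace.equiv (Fin (2*K)) ℂ).toLinearEquiv.toLinearMap) =
        Submodule.span ℂ (Set.range wᵀ) := by
      rw [Submodule.map_span]
      congr 1
      rw [← Set.range_comp]
      rfl
    calc Module.finrank ℂ V
        = Module.finrank ℂ (V.map (EuclideanSpace.equiv (Fin (2*K)) ℂ).toLinearEquiv.toLinearMap) :=
          (LinearEquiv.finrank_map_eq _ _).symm
      _ = w.rank := by rw [h1, Matrix.rank_eq_finrank_span_cols]; rfl
  set r := Module.finrank ℂ V with hr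
  let b : OrthonormalBasis (Fin r) ℂ V := stdOrthonormalBasis ℂ V
  let u : Fin r → EuclideanSpace ℂ (Fin (2*K)) := fun m => (b m : EuclideanSpace ℂ (Fin (2*K)))
  have hcol : ∀ j, col j ∈ V := fun j => Submodule.subset_span (Set.mem_range_self j)
  let cv : Fin (2*K) → V := fun j => ⟨col j, hcol j⟩
  let v : Fin r → Fin (2*K) → ℂ := fun m j => b.repr (cv j) m
  -- reconstruction of w from the orthonormal columns
  have hrecon : ∀ i j, w i j = ∑ m : Fin r, v m j * u m i := by
    intro i j
    have h1 : (cv j : EuclideanSpace ℂ (Fin (2*K))) = ∑ m : Fin r, v m j • u m := by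
      conv_lhs => rw [← b.sum_repr (cv j)]
      push_cast [Submodule.coe_sum]
      rfl
    have h1' := congrArg (WithLp.linearEquiv 2 ℂ (Fin (2*K) → ℂ)) h1
    rw [map_sum] at h1'
    simp only [_root_.map_smul] at h1'
    have h2 := congrFun h1' i
    rw [Finset.sum_apply] at h2
    simpa [smul_eq_mul, cv, col] using h2
  -- Parseval
  have hpars : ∀ j, ∑ m : Fin r, ‖v m j‖ ^ 2
      = ∑ i : Fin (2*K), ‖w i j‖ ^ 2 := by
    intro j
    have h1 : ‖b.repr (cv j)‖ = ‖cv j‖ := b.repr.norm_map (cv j)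
    rw [← Submodule.norm_coe (cv j)] at h1
    have h3 : ‖b.repr (cv j)‖^2 = ‖(cv j : EuclideanSpace ℂ (Fin (2*K)))‖^2 := by rw [h1]
    rw [PiLp.norm_sq_eq_of_L2, PiLp.norm_sq_eq_of_L2] at h3
    simpa using h3
  -- columns of u are unit vectors
  have hu : ∀ m, ∑ i : Fin (2*K), ‖u m i‖ ^ 2 = 1 := by
    intro m
    have h1 : ‖u m‖ = 1 := by
      have h0 := b.orthonormal.1 m
      rw [← Submodule.norm_coe (b m)] at h0
      exact h0
    have h3 : ‖u m‖^2 = 1^2 := by rw [h1]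
    rw [PiLp.norm_sq_eq_of_L2] at h3
    simpa using h3
  -- the vectors q m = a† (u m)
  let q : Fin r → Fin (2*K) → ℂ := fun m j => ∑ i : Fin (2*K), (starRingEnd ℂ) (a i j) * u m i
  have hq : ∀ m j, q m j = (if (j:ℕ)%2=0 then -((c:ℝ):ℂ) else ((c:ℝ):ℂ)) * u m (σ j) := by
    intro m j
    show (∑ i : Fin (2*K), (starRingEnd ℂ) (a i j) * u m i) = _
    rw [Finset.sum_eq_single (σ j)]
    · rw [haσ j]
      split <;> simp [Complex.conj_ofReal]
    · intro i _ hi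
      rw [ha0 i j hi]; simp
    · intro h; exact absurd (Finset.mem_univ _) h
  have hqabs : ∀ m j, ‖q m j‖ = c * ‖u m (σ j)‖ := by
    intro m j
    rw [hq]
    split <;> simp [norm_mul, Complex.norm_real, Real.norm_eq_abs, abs_of_nonneg hc0]
  have hqsum : ∀ m, ∑ j : Fin (2*K), ‖q m j‖ ^ 2 = c ^ 2 := by
    intro m
    have h1 : ∑ j : Fin (2*K), ‖u m (σ j)‖ ^ 2
        = ∑ j : Fin (2*K), ‖u m j‖ ^ 2 :=
      Equiv.sum_comp hσinv.toPerm (fun j => ‖u m j‖ ^ 2)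
    calc ∑ j : Fin (2*K), ‖q m j‖ ^ 2
        = ∑ j : Fin (2*K), c^2 * ‖u m (σ j)‖ ^ 2 := by
          refine Finset.sum_congr rfl fun j _ => ?_
          rw [hqabs]; ring
      _ = c^2 * ∑ j : Fin (2*K), ‖u m (σ j)‖ ^ 2 := by rw [Finset.mul_sum]
      _ = c^2 := by rw [h1, hu m, mul_one]
  -- rewrite the overlap
  have hT : (∑ i : Fin (2*K), ∑ j : Fin (2*K), (starRingEnd ℂ) (a i j) * w i j)
      = ∑ m : Fin r, ∑ j : Fin (2*K), v m j * q m j := by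
    calc (∑ i : Fin (2*K), ∑ j : Fin (2*K), (starRingEnd ℂ) (a i j) * w i j)
        = ∑ i : Fin (2*K), ∑ j : Fin (2*K), ∑ m : Fin r,
            v m j * ((starRingEnd ℂ) (a i j) * u m i) := by
          refine Finset.sum_congr rfl fun i _ => Finset.sum_congr rfl fun j _ => ?_
          rw [hrecon i j, Finset.mul_sum]
          exact Finset.sum_congr rfl fun m _ => by ring
      _ = ∑ i : Fin (2*K), ∑ m : Fin r, ∑ j : Fin (2*K),
            v m j * ((starRingEnd ℂ) (a i j) * u m i) :=
          Finset.sum_congr rfl fun i _ => Finset.sum_comm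
      _ = ∑ m : Fin r, ∑ i : Fin (2*K), ∑ j : Fin (2*K),
            v m j * ((starRingEnd ℂ) (a i j) * u m i) := Finset.sum_comm
      _ = ∑ m : Fin r, ∑ j : Fin (2*K), ∑ i : Fin (2*K),
            v m j * ((starRingEnd ℂ) (a i j) * u m i) :=
          Finset.sum_congr rfl fun m _ => Finset.sum_comm
      _ = ∑ m : Fin r, ∑ j : Fin (2*K), v m j * q m j := by
          refine Finset.sum_congr rfl fun m _ => Finset.sum_congr rfl fun j _ => ?_
          rw [Finset.mul_sum]
  set T := ∑ i : Fin (2*K), ∑ j : Fin (2*K), (starRingEnd ℂ) (a i j) * w i j with hTdef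
  set S := ∑ m : Fin r, ∑ j : Fin (2*K), ‖v m j‖ * ‖q m j‖ with hSdef
  have hS0 : 0 ≤ S := Finset.sum_nonneg fun _ _ => Finset.sum_nonneg fun _ _ =>
    mul_nonneg (norm_nonneg _) (norm_nonneg _)
  have hS : ‖T‖ ≤ S := by
    rw [hT, hSdef]
    refine le_trans (norm_sum_le _ _) (Finset.sum_le_sum fun m _ => ?_)
    refine le_trans (norm_sum_le _ _) (Finset.sum_le_sum fun j _ => ?_)
    exact le_of_eq (norm_mul _ _)
  have hA : ∑ m : Fin r, ∑ j : Fin (2*K), ‖q m j‖ ^ 2 = r * c ^ 2 := by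
    simp only [hqsum]
    rw [Finset.sum_const, Finset.card_univ, Fintype.card_fin, nsmul_eq_mul]
  have hB : ∑ m : Fin r, ∑ j : Fin (2*K), ‖v m j‖ ^ 2 = 1 / 2 := by
    rw [Finset.sum_comm]
    calc ∑ j : Fin (2*K), ∑ m : Fin r, ‖v m j‖ ^ 2
        = ∑ j : Fin (2*K), ∑ i : Fin (2*K), ‖w i j‖ ^ 2 :=
          Finset.sum_congr rfl fun j _ => hpars j
      _ = ∑ i : Fin (2*K), ∑ j : Fin (2*K), ‖w i j‖ ^ 2 := Finset.sum_comm
      _ = 1 / 2 := hnorm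
  have hCS : S ^ 2 ≤ (1 / 2) * ((r : ℝ) * c ^ 2) := by
    have h := Finset.sum_mul_sq_le_sq_mul_sq Finset.univ
      (fun p : Fin r × Fin (2*K) => ‖v p.1 p.2‖)
      (fun p : Fin r × Fin (2*K) => ‖q p.1 p.2‖)
    rw [Fintype.sum_prod_type, Fintype.sum_prod_type, Fintype.sum_prod_type] at h
    rw [hSdef]
    calc (∑ m : Fin r, ∑ j : Fin (2*K), ‖v m j‖ * ‖q m j‖) ^ 2
        ≤ (∑ m : Fin r, ∑ j : Fin (2*K), ‖v m j‖ ^ 2)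
          * (∑ m : Fin r, ∑ j : Fin (2*K), ‖q m j‖ ^ 2) := h
      _ = (1 / 2) * ((r : ℝ) * c ^ 2) := by rw [hA, hB]
  have hr2 : (r : ℝ) ≤ 2 * ((k : ℝ) - 1) := by
    have h1 : r ≤ 2 * (k - 1) := hVrank ▸ hrank
    calc (r : ℝ) ≤ ((2 * (k - 1) : ℕ) : ℝ) := Nat.cast_le.mpr h1
      _ = 2 * ((k : ℝ) - 1) := by
        rw [Nat.cast_mul, Nat.cast_sub (by omega : 1 ≤ k)]
        norm_num
  have habs2 : ‖2 * T‖ = 2 * ‖T‖ := by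
    rw [norm_mul]
    norm_num
  calc ‖2 * T‖ ^ 2 = 4 * ‖T‖ ^ 2 := by rw [habs2]; ring
    _ ≤ 4 * S ^ 2 := by
        have := pow_le_pow_left₀ (norm_nonneg T) hS 2
        linarith
    _ ≤ 4 * ((1 / 2) * ((r : ℝ) * c ^ 2)) := by linarith
    _ = 2 * (r : ℝ) * c ^ 2 := by ring
    _ = (r : ℝ) / (2 * K) := by rw [hc2]; field_simp; ring
    _ ≤ ((k : ℝ) - 1) / K := by
        rw [div_le_div_iff₀ (by positivity) hK0]
        nlinarith [hr2, hK0]
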